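/- Let v₁, …, v_n be the vertices of a linear interval (proper interval) graph J in their interval order (i.e., for i < j < k, if v_i is adjacent to v_k then v_j is adjacent to both v_i and v_k). The greedy algorithm that repeatedly takes the undominated vertex of lowest index and adds its neighbor (in the closed neighborhood) of maximum index to the dominating set produces a minimum dominating set of J. -/

import Mathlib

/-- `D` is a dominating set of `G`. -/
def Dominating {V : Type*} (G : SimpleGraph V) (D : Set V) : Prop :=
  ∀ v, v ∈ D ∨ ∃ u ∈ D, G.Adj u v

/-- The domination number. -/
noncomputable def domNum {V : Type*} (G : SimpleGraph V) : ℕ :=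
  sInf {n | ∃ D : Set V, D.Finite ∧ D.ncard = n ∧ Dominating G D}

/-- One step of the greedy algorithm: if some vertex is undominated, take the undominated
vertex of lowest index and add to `D` its neighbor (in its closed neighborhood) of
maximum index. -/
def greedyStep {n : ℕ} (J : SimpleGraph (Fin n)) [DecidableRel J.Adj]
    (D : Finset (Fin n)) : Finset (Fin n) :=
  let U : Finset (Fin n) :=
    Finset.univ.filter (fun v => ¬ (v ∈ D ∨ ∃ u ∈ D, J.Adj u v))
  if h : U.Nonempty then
    insert
      ((Finset.univ.filter (fun m => m = U.min' h ∨ J.Adj (U.min' h) m)).max'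
        ⟨U.min' h, Finset.mem_filter.2 ⟨Finset.mem_univ _, Or.inl rfl⟩⟩)
      D
  else D

/-- The greedy dominating set: iterate the greedy step `n` times starting from `∅`. -/
def greedy {n : ℕ} (J : SimpleGraph (Fin n)) [DecidableRel J.Adj] : Finset (Fin n) :=
  (greedyStep J)^[n] ∅

section Aux

variable {n : ℕ} (J : SimpleGraph (Fin n)) [DecidableRel J.Adj]

/-- Closed neighborhood as a finset. -/
private def Nb (u : Fin n) : Finset (Fin n) :=
  Finset.univ.filter (fun m => m = u ∨ J.Adj u m)

private lemma nb_ne (u : Fin n) : (Nb J u).Nonempty :=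
  ⟨u, Finset.mem_filter.2 ⟨Finset.mem_univ _, Or.inl rfl⟩⟩

private lemma mem_Nb {u w : Fin n} : w ∈ Nb J u ↔ (w = u ∨ J.Adj u w) := by
  simp [Nb]

/-- Undominated vertices. -/
private def Ufin (D : Finset (Fin n)) : Finset (Fin n) :=
  Finset.univ.filter (fun v => ¬ (v ∈ D ∨ ∃ u ∈ D, J.Adj u v))

private lemma greedyStep_eq (D : Finset (Fin n)) :
    greedyStep J D =
      if h : (Ufin J D).Nonempty then
        insert ((Nb J ((Ufin J D).min' h)).max' (nb_ne J _)) D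
      else D := rfl

private lemma dom_mono {D D' : Finset (Fin n)} (h : D ⊆ D') {v : Fin n}
    (hd : v ∈ D ∨ ∃ x ∈ D, J.Adj x v) : v ∈ D' ∨ ∃ x ∈ D', J.Adj x v := by
  rcases hd with h1 | ⟨x, hx, ha⟩
  · exact Or.inl (h h1)
  · exact Or.inr ⟨x, h hx, ha⟩

/-- Key disjointness : the closed neighborhood of a previously-chosen vertex `u`
is disjoint from that of the new undominated vertex `us`. -/
private lemma disj_key
    (hord : ∀ i j k : Fin n, i < j → j < k → J.Adj i k → J.Adj i j ∧ J.Adj j k)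
    {D : Finset (Fin n)} {u us m : Fin n}
    (hmD : m ∈ D) (hmN : m ∈ Nb J u) (hmax : ∀ w ∈ Nb J u, w ≤ m)
    (hdom : ∀ v : Fin n, v ≤ u → v ∈ D ∨ ∃ x ∈ D, J.Adj x v)
    (hstar : ¬ (us ∈ D ∨ ∃ x ∈ D, J.Adj x us)) :
    ∀ w, w ∈ Nb J u → w ∈ Nb J us → False := by
  push_neg at hstar
  obtain ⟨hus1, hus2⟩ := hstar
  have hlt : u < us := by
    by_contra hle
    push_neg at hle
    rcases hdom us hle with h | ⟨x, hx, ha⟩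
    · exact hus1 h
    · exact hus2 x hx ha
  have hmne : m ≠ us := fun e => hus1 (e ▸ hmD)
  have hmna : ¬ J.Adj m us := hus2 m hmD
  intro w hwu hwus
  have hwm : w ≤ m := hmax w hwu
  rw [mem_Nb] at hwu hwus hmN
  rcases eq_or_lt_of_le hwm with rfl | hwltm
  · rcases hwus with h | h
    · exact hmne h
    · exact hmna (J.adj_symm h)
  have humem : u ≤ m := hmax u ((mem_Nb J).2 (Or.inl rfl))
  rcases eq_or_lt_of_le humem with hum | hum
  · -- u = m
    rcases hwus with rfl | ha
    · exact absurd hlt (not_lt.2 (le_of_lt (hum ▸ hwltm)))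
    · have h1 := hord w u us (hum ▸ hwltm) hlt (J.adj_symm ha)
      exact hmna (hum ▸ h1.2)
  · -- u < m
    have haum : J.Adj u m := by
      rcases hmN with e | a
      · exact absurd e.symm (ne_of_lt hum)
      · exact a
    rcases hmne.lt_or_gt with h1 | h1
    · -- m < us
      rcases hwus with rfl | ha
      · exact absurd (hwltm.trans h1) (lt_irrefl w)
      · exact hmna ((hord w m us hwltm h1 (J.adj_symm ha)).2)
    · -- us < m
      exact hmna (J.adj_symm ((hord u us m hlt h1 haum).2))

/-- The invariant maintained by the greedy algorithm. -/
private def GInv (D : Finset (Fin n)) : Prop :=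
  ∃ T : Finset (Fin n),
    T.card = D.card ∧
    (∀ u ∈ T, ∃ m ∈ D, m ∈ Nb J u ∧ ∀ w ∈ Nb J u, w ≤ m) ∧
    (∀ u ∈ T, ∀ u' ∈ T, u ≠ u' → ∀ w, w ∈ Nb J u → w ∈ Nb J u' → False) ∧
    (∀ u ∈ T, ∀ v : Fin n, v ≤ u → v ∈ D ∨ ∃ x ∈ D, J.Adj x v)

private lemma inv_step
    (hord : ∀ i j k : Fin n, i < j → j < k → J.Adj i k → J.Adj i j ∧ J.Adj j k)
    {D : Finset (Fin n)} (hI : GInv J D) : GInv J (greedyStep J D) := by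
  rw [greedyStep_eq]
  split_ifs with h
  · obtain ⟨T, hc, hmax, hdisj, hdom⟩ := hI
    set us := (Ufin J D).min' h with hus_def
    set ms := (Nb J us).max' (nb_ne J us) with hms_def
    have hstar : ¬ (us ∈ D ∨ ∃ x ∈ D, J.Adj x us) :=
      (Finset.mem_filter.1 (Finset.min'_mem _ h)).2
    have hmsN : ms ∈ Nb J us := Finset.max'_mem _ _
    have hmsD : ms ∉ D := by
      intro hms
      apply hstar
      rcases (mem_Nb J).1 hmsN with e | a
      · exact Or.inl (e ▸ hms)
      · exact Or.inr ⟨ms, hms, J.adj_symm a⟩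
    have husT : us ∉ T := by
      intro hu
      obtain ⟨m, hmD, hmN, _⟩ := hmax us hu
      apply hstar
      rcases (mem_Nb J).1 hmN with e | a
      · exact Or.inl (e ▸ hmD)
      · exact Or.inr ⟨m, hmD, J.adj_symm a⟩
    have hsub : D ⊆ insert ms D := Finset.subset_insert _ _
    -- us dominated by the new set
    have husdom : us ∈ insert ms D ∨ ∃ x ∈ insert ms D, J.Adj x us := by
      rcases (mem_Nb J).1 hmsN with e | a
      · exact Or.inl (e ▸ Finset.mem_insert_self _ _)
      · exact Or.inr ⟨ms, Finset.mem_insert_self _ _, J.adj_symm a⟩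
    refine ⟨insert us T, ?_, ?_, ?_, ?_⟩
    · rw [Finset.card_insert_of_notMem husT, Finset.card_insert_of_notMem hmsD, hc]
    · intro u hu
      rcases Finset.mem_insert.1 hu with rfl | hu
      · exact ⟨ms, Finset.mem_insert_self _ _, hmsN, fun w hw => Finset.le_max' _ _ hw⟩
      · obtain ⟨m, hmD, hmN, hmm⟩ := hmax u hu
        exact ⟨m, hsub hmD, hmN, hmm⟩
    · intro u hu u' hu' hne
      rcases Finset.mem_insert.1 hu with rfl | hu
      · rcases Finset.mem_insert.1 hu' with rfl | hu'
        · exact absurd rfl hne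
        · obtain ⟨m, hmD, hmN, hmm⟩ := hmax u' hu'
          intro w hw hw'
          exact disj_key J hord hmD hmN hmm (hdom u' hu') hstar w hw' hw
      · rcases Finset.mem_insert.1 hu' with rfl | hu'
        · obtain ⟨m, hmD, hmN, hmm⟩ := hmax u hu
          intro w hw hw'
          exact disj_key J hord hmD hmN hmm (hdom u hu) hstar w hw hw'
        · exact hdisj u hu u' hu' hne
    · intro u hu v hv
      rcases Finset.mem_insert.1 hu with rfl | hu
      · rcases eq_or_lt_of_le hv with rfl | hvlt
        · exact husdom
        · have hvU : v ∉ Ufin J D := fun hvU =>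
            absurd (Finset.min'_le _ v hvU) (not_le.2 hvlt)
          have : v ∈ D ∨ ∃ x ∈ D, J.Adj x v := by
            by_contra hc2
            exact hvU (Finset.mem_filter.2 ⟨Finset.mem_univ _, hc2⟩)
          exact dom_mono J hsub this
      · exact dom_mono J hsub (hdom u hu v hv)
  · exact hI

private lemma inv_iter
    (hord : ∀ i j k : Fin n, i < j → j < k → J.Adj i k → J.Adj i j ∧ J.Adj j k)
    (t : ℕ) : GInv J ((greedyStep J)^[t] ∅) := by
  induction t with
  | zero => exact ⟨∅, by simp, by simp, by simp, by simp⟩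
  | succ t ih =>
    rw [Function.iterate_succ_apply']
    exact inv_step J hord ih

private lemma card_Ufin (t : ℕ) :
    (Ufin J ((greedyStep J)^[t] ∅)).card ≤ n - t := by
  induction t with
  | zero =>
    exact (Finset.card_filter_le _ _).trans (by simp)
  | succ t ih =>
    rw [Function.iterate_succ_apply']
    set D := (greedyStep J)^[t] ∅ with hD
    rw [greedyStep_eq]
    split_ifs with h
    · set us := (Ufin J D).min' h with hus_def
      set ms := (Nb J us).max' (nb_ne J us) with hms_def
      have hmsN : ms ∈ Nb J us := Finset.max'_mem _ _
      have hsub : Ufin J (insert ms D) ⊆ (Ufin J D).erase us := by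
        intro v hv
        have hv' : ¬ (v ∈ insert ms D ∨ ∃ x ∈ insert ms D, J.Adj x v) :=
          (Finset.mem_filter.1 hv).2
        have hvD : v ∈ Ufin J D :=
          Finset.mem_filter.2 ⟨Finset.mem_univ _,
            fun hd => hv' (dom_mono J (Finset.subset_insert _ _) hd)⟩
        refine Finset.mem_erase.2 ⟨?_, hvD⟩
        rintro rfl
        apply hv'
        rcases (mem_Nb J).1 hmsN with e | a
        · exact Or.inl (e ▸ Finset.mem_insert_self _ _)
        · exact Or.inr ⟨ms, Finset.mem_insert_self _ _, J.adj_symm a⟩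
      have h1 : us ∈ Ufin J D := Finset.min'_mem _ h
      have h2 := Finset.card_le_card hsub
      have h3 : ((Ufin J D).erase us).card = (Ufin J D).card - 1 :=
        Finset.card_erase_of_mem h1
      have h4 : 1 ≤ (Ufin J D).card := Finset.card_pos.2 ⟨us, h1⟩
      omega
    · have he : Ufin J D = ∅ := Finset.not_nonempty_iff_eq_empty.1 h
      simp [he]

end Aux

/-- If `v₁, …, v_n` is a linear interval (proper interval) order of the vertices of `J`
(for `i < j < k`, adjacency of `v_i, v_k` implies `v_j` is adjacent to both), then the
greedy algorithm produces a minimum dominating set of `J`. -/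
theorem stmt16 {n : ℕ} (J : SimpleGraph (Fin n)) [DecidableRel J.Adj]
    (hord : ∀ i j k : Fin n, i < j → j < k → J.Adj i k → J.Adj i j ∧ J.Adj j k) :
    Dominating J (↑(greedy J) : Set (Fin n)) ∧ (greedy J).card = domNum J := by
  have hUe : Ufin J (greedy J) = ∅ := by
    have hc := card_Ufin J n
    rw [Nat.sub_self] at hc
    have : (Ufin J ((greedyStep J)^[n] ∅)).card = 0 := Nat.le_zero.1 hc
    rw [greedy]
    exact Finset.card_eq_zero.1 this
  have hdomset : Dominating J (↑(greedy J) : Set (Fin n)) := by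
    intro v
    have hv : v ∉ Ufin J (greedy J) := by simp [hUe]
    have : v ∈ greedy J ∨ ∃ u ∈ greedy J, J.Adj u v := by
      by_contra hc
      exact hv (Finset.mem_filter.2 ⟨Finset.mem_univ _, hc⟩)
    rcases this with h | ⟨u, hu, ha⟩
    · exact Or.inl (by simpa using h)
    · exact Or.inr ⟨u, by simpa using hu, ha⟩
  refine ⟨hdomset, ?_⟩
  have hmem : (greedy J).card ∈
      {k | ∃ S : Set (Fin n), S.Finite ∧ S.ncard = k ∧ Dominating J S} :=
    ⟨(↑(greedy J) : Set (Fin n)), (greedy J).finite_toSet,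
      Set.ncard_coe_finset _, hdomset⟩
  obtain ⟨T, hTc, _, hTdisj, _⟩ : GInv J (greedy J) := inv_iter J hord n
  have hlb : ∀ x ∈ {k | ∃ S : Set (Fin n), S.Finite ∧ S.ncard = k ∧ Dominating J S},
      (greedy J).card ≤ x := by
    rintro x ⟨S, hSf, rfl, hSdom⟩
    have hchoice : ∀ u : Fin n, ∃ s, u ∈ T → s ∈ S ∧ s ∈ Nb J u := by
      intro u
      rcases hSdom u with h | ⟨s, hs, ha⟩
      · exact ⟨u, fun _ => ⟨h, (mem_Nb J).2 (Or.inl rfl)⟩⟩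
      · exact ⟨s, fun _ => ⟨hs, (mem_Nb J).2 (Or.inr (J.adj_symm ha))⟩⟩
    choose f hf using hchoice
    have hmaps : ∀ u ∈ T, f u ∈ hSf.toFinset := fun u hu =>
      hSf.mem_toFinset.2 (hf u hu).1
    have hinj : Set.InjOn f ↑T := by
      intro a ha b hb hab
      by_contra hne
      exact hTdisj a ha b hb hne (f a) ((mem_Nb J).2 ((mem_Nb J).1 (hf a ha).2))
        (by rw [hab]; exact (hf b hb).2)
    have hcard := Finset.card_le_card_of_injOn f hmaps hinj
    calc (greedy J).card = T.card := hTc.symm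
      _ ≤ hSf.toFinset.card := hcard
      _ = S.ncard := (Set.ncard_eq_toFinset_card S hSf).symm
  rw [domNum]
  exact le_antisymm (le_csInf ⟨_, hmem⟩ hlb) (Nat.sInf_le hmem)
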